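/- For every λ ∈ ℂ with |λ| < a, where a = lim_{t→∞} φ(t)/t, the exponential function e_λ(z) = e^{λz} belongs to the weighted Bergman space B_w^p (for 1 ≤ p < ∞), and is an eigenvector of the differentiation operator D with eigenvalue λ. -/

import Mathlib

open Filter MeasureTheory

lemma exp_neg_le_aux {c : ℝ} (hc : 0 < c) {t : ℝ} (ht : 0 ≤ t) :
    Real.exp (-c * t) ≤ (max 1 (3 / c)) ^ 3 * (1 + t) ^ (-(3 : ℝ)) := by
  set M := max 1 (3 / c) with hM
  have hM1 : (1:ℝ) ≤ M := le_max_left _ _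
  have hMc : 3 / c ≤ M := le_max_right _ _
  have h1t : (0:ℝ) < 1 + t := by linarith
  have key : (1 + t) * Real.exp (-(c * t) / 3) ≤ M := by
    have hexp : 1 + c * t / 3 ≤ Real.exp (c * t / 3) := by
      have := Real.add_one_le_exp (c * t / 3); linarith
    have hMexp : 1 + t ≤ M * Real.exp (c * t / 3) := by
      have h2 : 1 + t ≤ M * (1 + c * t / 3) := by
        have h3 : 3 / c * (c * t / 3) = t := by field_simp
        nlinarith [mul_le_mul_of_nonneg_right hMc (by positivity : (0:ℝ) ≤ c * t / 3)]
      have := mul_le_mul_of_nonneg_left hexp (by linarith : (0:ℝ) ≤ M)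
      linarith
    calc (1 + t) * Real.exp (-(c * t) / 3)
        ≤ M * Real.exp (c * t / 3) * Real.exp (-(c * t) / 3) :=
          mul_le_mul_of_nonneg_right hMexp (Real.exp_pos _).le
      _ = M := by rw [mul_assoc, ← Real.exp_add]; ring_nf; simp
  have hpow : ((1 + t) * Real.exp (-(c * t) / 3)) ^ 3 ≤ M ^ 3 :=
    pow_le_pow_left₀ (by positivity) key 3
  have hexp3 : Real.exp (-(c * t) / 3) ^ 3 = Real.exp (-c * t) := by
    rw [← Real.exp_nat_mul]; ring_nf
  have : (1 + t) ^ 3 * Real.exp (-c * t) ≤ M ^ 3 := by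
    rw [← hexp3]; calc (1 + t) ^ 3 * Real.exp (-(c * t) / 3) ^ 3
        = ((1 + t) * Real.exp (-(c * t) / 3)) ^ 3 := by ring
      _ ≤ M ^ 3 := hpow
  rw [show (-(3:ℝ)) = -((3:ℕ):ℝ) by norm_num, Real.rpow_neg h1t.le, Real.rpow_natCast]
  rw [← div_eq_mul_inv, le_div_iff₀ (by positivity), mul_comm]
  exact this

lemma deriv_part (lam : ℂ) (z : ℂ) :
    deriv (fun w : ℂ => Complex.exp (lam * w)) z = lam * Complex.exp (lam * z) := by
  have h : HasDerivAt (fun w : ℂ => Complex.exp (lam * w)) (Complex.exp (lam * z) * (lam * 1)) z :=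
    HasDerivAt.cexp ((hasDerivAt_id z).const_mul lam)
  rw [h.deriv]; ring

/-- for `|λ| < a = lim φ(t)/t`, the exponential `e_λ(z) = e^{λz}` belongs to
the weighted Bergman space `B_w^p` (its `p`-th power against the weight is integrable),
and it is an eigenvector of differentiation with eigenvalue `λ`. -/
theorem stmt_2
    (φ : ℝ → ℝ)
    (hφ0 : ∀ t, 0 ≤ t → 0 ≤ φ t)
    (hconc : ConcaveOn ℝ (Set.Ici 0) φ)
    (hmono : MonotoneOn φ (Set.Ici 0))
    (hsub : ∀ s t : ℝ, 0 ≤ s → 0 ≤ t → φ (s + t) ≤ φ s + φ t)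
    (hzero : φ 0 = 0)
    (hlog : Tendsto (fun t => φ t / Real.log t) atTop atTop)
    (a : ℝ) (ha : Tendsto (fun t => φ t / t) atTop (nhds a))
    (p : ℝ) (hp : 1 ≤ p)
    (lam : ℂ) (hlam : ‖lam‖ < a) :
    Integrable (fun z : ℂ =>
        ‖Complex.exp (lam * z)‖ ^ p * Real.exp (-p * φ ‖z‖)) ∧
      ∀ z : ℂ, deriv (fun w : ℂ => Complex.exp (lam * w)) z = lam * Complex.exp (lam * z) := by
  refine ⟨?_, fun z => deriv_part lam z⟩
  set b := ‖lam‖ with hbdef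
  have hb0 : 0 ≤ b := norm_nonneg lam
  set ε := (a - b) / 2 with hεdef
  have hε : 0 < ε := by simp only [hεdef]; linarith
  have hba : b + ε < a := by simp only [hεdef]; linarith
  -- get R
  obtain ⟨R₀, hR₀⟩ := eventually_atTop.mp (ha.eventually (eventually_gt_nhds hba))
  set R := max R₀ 1 with hRdef
  have hR1 : (1:ℝ) ≤ R := le_max_right _ _
  have hR0 : (0:ℝ) < R := lt_of_lt_of_le one_pos hR1
  -- linear lower bound consequence
  have hbound : ∀ t : ℝ, 0 ≤ t → b * t - φ t ≤ (b + ε) * R - ε * t := by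
    intro t ht
    rcases le_or_gt R t with h | h
    · have := hR₀ t (le_trans (le_max_left _ _) h)
      have htpos : 0 < t := lt_of_lt_of_le hR0 h
      have : (b + ε) * t < φ t := by
        rw [lt_div_iff₀ htpos] at this; linarith
      nlinarith
    · have := hφ0 t ht
      nlinarith
  -- measurability
  have hg : Measurable fun t : ℝ => φ (max t 0) := by
    apply Monotone.measurable
    intro s t hst
    exact hmono (Set.mem_Ici.mpr (le_max_right _ _)) (Set.mem_Ici.mpr (le_max_right _ _))
      (max_le_max hst le_rfl)
  have hmeas : AEStronglyMeasurable (fun z : ℂ =>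
      ‖Complex.exp (lam * z)‖ ^ p * Real.exp (-p * φ ‖z‖)) volume := by
    have : (fun z : ℂ => ‖Complex.exp (lam * z)‖ ^ p
        * Real.exp (-p * φ ‖z‖))
        = fun z : ℂ => ‖Complex.exp (lam * z)‖ ^ p
        * Real.exp (-p * φ (max ‖z‖ 0)) := by
      funext z
      rw [max_eq_left (norm_nonneg z)]
    rw [this]
    apply Measurable.aestronglyMeasurable
    have hc1 : Continuous fun z : ℂ => ‖Complex.exp (lam * z)‖ :=
      continuous_norm.comp (Complex.continuous_exp.comp (continuous_const.mul continuous_id))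
    exact ((hc1.rpow_const fun z => Or.inr (le_trans zero_le_one hp)).measurable).mul
      (Real.measurable_exp.comp
        (measurable_const.mul (hg.comp continuous_norm.measurable)))
  -- domination
  set c := p * ε with hcdef
  have hc : 0 < c := mul_pos (lt_of_lt_of_le one_pos hp) hε
  set M := max 1 (3 / c) with hMdef
  set C := Real.exp (p * ((b + ε) * R)) * M ^ 3 with hCdef
  have hfin : Integrable (fun z : ℂ => C * (1 + ‖z‖) ^ (-(3:ℝ))) volume := by
    refine (integrable_one_add_norm ?_).const_mul C
    rw [Complex.finrank_real_complex]; norm_num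
  refine Integrable.mono' hfin hmeas (Filter.Eventually.of_forall fun z => ?_)
  have habs : (0:ℝ) ≤ ‖z‖ := norm_nonneg z
  have hexp_re : (lam * z).re ≤ b * ‖z‖ := by
    calc (lam * z).re ≤ ‖lam * z‖ := Complex.re_le_norm _
      _ = b * ‖z‖ := by rw [norm_mul]
  have hf_eq : ‖Complex.exp (lam * z)‖ ^ p * Real.exp (-p * φ ‖z‖)
      = Real.exp ((lam * z).re * p + -p * φ ‖z‖) := by
    rw [Complex.norm_exp, ← Real.exp_mul, ← Real.exp_add]
  have hnn : (0:ℝ) ≤ ‖Complex.exp (lam * z)‖ ^ p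
      * Real.exp (-p * φ ‖z‖) := by positivity
  rw [Real.norm_eq_abs, abs_of_nonneg hnn, hf_eq]
  have hp0 : (0:ℝ) ≤ p := le_trans zero_le_one hp
  have h1 : p * ((lam * z).re) ≤ p * (b * ‖z‖) :=
    mul_le_mul_of_nonneg_left hexp_re hp0
  have h2 : p * (b * ‖z‖ - φ ‖z‖)
      ≤ p * ((b + ε) * R - ε * ‖z‖) :=
    mul_le_mul_of_nonneg_left (hbound _ habs) hp0
  have harg : (lam * z).re * p + -p * φ ‖z‖
      ≤ p * ((b + ε) * R) + -c * ‖z‖ := by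
    simp only [hcdef]; nlinarith
  calc Real.exp ((lam * z).re * p + -p * φ ‖z‖)
      ≤ Real.exp (p * ((b + ε) * R) + -c * ‖z‖) := Real.exp_le_exp.mpr harg
    _ = Real.exp (p * ((b + ε) * R)) * Real.exp (-c * ‖z‖) := Real.exp_add _ _
    _ ≤ Real.exp (p * ((b + ε) * R)) * (M ^ 3 * (1 + ‖z‖) ^ (-(3:ℝ))) :=
        mul_le_mul_of_nonneg_left (exp_neg_le_aux hc habs) (Real.exp_pos _).le
    _ = C * (1 + ‖z‖) ^ (-(3:ℝ)) := by rw [hCdef]; ring
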